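/- arXiv:2504.19011 — 2 statements merged into one kernel-verified Lean document; each statement's English description precedes it below -/
import Mathlib

section
/- For any rational vectors t, v, w in ℚ^n with v ≠ 0 and any ε > 0, there exist positive rational numbers δ, τ with δ < ε and τ < ε such that den(t + δ·v) = den(t + δ·v + τ·w), where den(x) of a rational vector x denotes the least common multiple of the denominators of its coordinates. -/
/-- den of `r + z / p^k` when `p` is prime, `p ∤ r.den`, `p ∤ z`. -/
lemma den_add_div_pow (r : ℚ) {p : ℕ} (hp : p.Prime) (hpd : ¬ p ∣ r.den)
    {z : ℤ} (hz : ¬ (p : ℤ) ∣ z) {k : ℕ} (hk : k ≠ 0) :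
    (r + (z : ℚ) / (p : ℚ) ^ k).den = r.den * p ^ k := by
  have hb0 : (0:ℤ) < (r.den : ℤ) * (p:ℤ) ^ k := by
    have : (0:ℤ) < (r.den:ℤ) := by exact_mod_cast r.pos
    have : (0:ℤ) < (p:ℤ) := by exact_mod_cast hp.pos
    positivity
  set N : ℤ := r.num * (p:ℤ) ^ k + (r.den : ℤ) * z with hN
  have heq : r + (z : ℚ) / (p : ℚ) ^ k = (N : ℚ) / (((r.den : ℤ) * (p:ℤ) ^ k : ℤ) : ℚ) := by
    have h1 : ((r.den : ℚ)) ≠ 0 := by exact_mod_cast r.den_ne_zero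
    have h2 : ((p : ℚ)) ≠ 0 := by exact_mod_cast hp.ne_zero
    have hr : r * (r.den : ℚ) = (r.num : ℚ) := Rat.mul_den_eq_num r
    rw [eq_div_iff (by push_cast; positivity)]
    push_cast [hN]
    field_simp
    linear_combination ((p:ℚ)^k) * hr
  have hprime : Prime ((p:ℤ)) := Nat.prime_iff_prime_int.mp hp
  have hpz : ¬ (p:ℤ) ∣ (r.den : ℤ) := by
    rw [Int.natCast_dvd_natCast]; exact hpd
  have hcopden : IsCoprime N ((r.den : ℤ)) := by
    have h1 : IsCoprime r.num ((r.den : ℤ)) := by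
      rw [Int.isCoprime_iff_gcd_eq_one]; exact r.reduced
    have h2 : IsCoprime ((p:ℤ) ^ k) ((r.den : ℤ)) :=
      (hprime.irreducible.coprime_iff_not_dvd.mpr hpz).pow_left
    exact (h1.mul_left h2).add_mul_left_left z
  have hcopp : IsCoprime N ((p:ℤ) ^ k) := by
    apply IsCoprime.pow_right
    rw [isCoprime_comm, hprime.coprime_iff_not_dvd]
    intro hdvd
    have h1 : (p:ℤ) ∣ r.num * (p:ℤ) ^ k :=
      dvd_mul_of_dvd_right (dvd_pow_self _ hk) _
    have h2 : (p:ℤ) ∣ (r.den : ℤ) * z := by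
      have := dvd_sub hdvd h1
      simpa [hN] using this
    rcases hprime.dvd_mul.mp h2 with h | h
    · exact hpz h
    · exact hz h
  have hcop : IsCoprime N ((r.den : ℤ) * (p:ℤ) ^ k) := hcopden.mul_right hcopp
  have := Rat.den_div_eq_of_coprime hb0 (Int.isCoprime_iff_gcd_eq_one.mp hcop)
  rw [heq]
  exact_mod_cast this

lemma coprime_finset_lcm {α : Type*} [DecidableEq α] {p : ℕ} (hp : p.Prime) (s : Finset α)
    (T : α → ℕ) (hT : ∀ i ∈ s, ¬ p ∣ T i) : ¬ p ∣ s.lcm T := by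
  induction s using Finset.induction with
  | empty => simpa using hp.one_lt.ne'
  | insert a s' hnotmem ih =>
    rw [Finset.lcm_insert]
    intro hdvd
    have : p ∣ T a * s'.lcm T := hdvd.trans (Nat.lcm_dvd_mul _ _)
    rcases (Nat.Prime.dvd_mul hp).mp this with h | h
    · exact hT a (Finset.mem_insert_self a s') h
    · exact ih (fun i hi => hT i (Finset.mem_insert_of_mem hi)) h

lemma lcm_aux {n : ℕ} {p : ℕ} (hp : p.Prime) (T D : Fin n → ℕ)
    (hT : ∀ i, ¬ p ∣ T i) (hTD : ∀ i, T i ∣ D i) (hDT : ∀ i, D i ∣ p ^ 2 * T i)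
    {i0 : Fin n} (h0 : p ^ 2 ∣ D i0) :
    Finset.univ.lcm D = p ^ 2 * Finset.univ.lcm T := by
  apply Nat.dvd_antisymm
  · apply Finset.lcm_dvd
    intro i _
    exact (hDT i).trans (Nat.mul_dvd_mul_left _ (Finset.dvd_lcm (Finset.mem_univ i)))
  · have hcop : Nat.Coprime (p ^ 2) (Finset.univ.lcm T) :=
      Nat.Coprime.pow_left _ ((hp.coprime_iff_not_dvd).mpr
        (coprime_finset_lcm hp _ _ (fun i _ => hT i)))
    apply hcop.mul_dvd_of_dvd_of_dvd
    · exact h0.trans (Finset.dvd_lcm (Finset.mem_univ i0))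
    · exact Finset.lcm_dvd (fun i _ => (hTD i).trans (Finset.dvd_lcm (Finset.mem_univ i)))

/-- Denominator of a rational vector: lcm of coordinate denominators. -/
def vecDen {n : ℕ} (v : Fin n → ℚ) : ℕ :=
  Finset.univ.lcm (fun i => (v i).den)

lemma vecDen_ne_zero {n : ℕ} (v : Fin n → ℚ) : vecDen v ≠ 0 := by
  intro h
  rw [vecDen, Finset.lcm_eq_zero_iff] at h
  obtain ⟨i, -, hi⟩ := h
  exact (v i).den_ne_zero hi

lemma clear_den {n : ℕ} (v : Fin n → ℚ) (i : Fin n) :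
    ((vecDen v : ℚ)) * v i = (((vecDen v / (v i).den : ℕ) : ℤ) * (v i).num : ℤ) := by
  have hd : (v i).den ∣ vecDen v := Finset.dvd_lcm (Finset.mem_univ i)
  obtain ⟨c, hc⟩ := hd
  have hq : vecDen v / (v i).den = c := by
    rw [hc, Nat.mul_div_cancel_left _ (v i).pos]
  have hr : v i * ((v i).den : ℚ) = ((v i).num : ℚ) := Rat.mul_den_eq_num (v i)
  rw [hq, hc]
  push_cast
  linear_combination (c : ℚ) * hr

theorem stmt_0 {n : ℕ} (t v w : Fin n → ℚ) (hv : v ≠ 0) (ε : ℚ) (hε : 0 < ε) :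
    ∃ δ τ : ℚ, 0 < δ ∧ δ < ε ∧ 0 < τ ∧ τ < ε ∧
      vecDen (t + δ • v) = vecDen (t + δ • v + τ • w) := by
  classical
  obtain ⟨i0, hi0⟩ := Function.ne_iff.mp hv
  rw [Pi.zero_apply] at hi0
  set Dv : ℕ := vecDen v with hDvdef
  set Dw : ℕ := vecDen w with hDwdef
  have hDv0 : Dv ≠ 0 := vecDen_ne_zero v
  have hDw0 : Dw ≠ 0 := vecDen_ne_zero w
  set z : Fin n → ℤ := fun i => ((Dv / (v i).den : ℕ) : ℤ) * (v i).num with hzdef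
  set u : Fin n → ℤ := fun i => ((Dw / (w i).den : ℕ) : ℤ) * (w i).num with hudef
  have hz : ∀ i, (Dv : ℚ) * v i = ((z i : ℤ) : ℚ) := fun i => clear_den v i
  have hu : ∀ i, (Dw : ℚ) * w i = ((u i : ℤ) : ℚ) := fun i => clear_den w i
  have hz0 : ∀ i, v i = 0 → z i = 0 := by
    intro i h
    have := hz i
    rw [h, mul_zero] at this
    exact_mod_cast this.symm
  have hu0 : ∀ i, w i = 0 → u i = 0 := by
    intro i h
    have := hu i
    rw [h, mul_zero] at this
    exact_mod_cast this.symm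
  set M : ℕ := Finset.univ.sup (fun i => max (t i).den (max (z i).natAbs (u i).natAbs))
    with hMdef
  obtain ⟨p, hpB, hp⟩ := Nat.exists_infinite_primes
    (M + ⌈(Dv : ℚ)/ε⌉₊ + ⌈(Dw : ℚ)/ε⌉₊ + 1)
  have hMp : M < p := by omega
  have hsup : ∀ i, max (t i).den (max (z i).natAbs (u i).natAbs) ≤ M := fun i =>
    Finset.le_sup (f := fun i => max (t i).den (max (z i).natAbs (u i).natAbs))
      (Finset.mem_univ i)
  have hMt : ∀ i, (t i).den ≤ M := fun i => le_trans (le_max_left _ _) (hsup i)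
  have hMz : ∀ i, (z i).natAbs ≤ M := fun i =>
    le_trans (le_trans (le_max_left _ _) (le_max_right _ _)) (hsup i)
  have hMu : ∀ i, (u i).natAbs ≤ M := fun i =>
    le_trans (le_trans (le_max_right _ _) (le_max_right _ _)) (hsup i)
  have hpt : ∀ i, ¬ p ∣ (t i).den := by
    intro i hdvd
    have := Nat.le_of_dvd (t i).pos hdvd
    have := hMt i
    omega
  have hpz : ∀ i, v i ≠ 0 → ¬ (p : ℤ) ∣ z i := by
    intro i hvi hdvd
    have hzne : z i ≠ 0 := by
      intro h
      have := hz i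
      rw [h] at this
      have hDvq : (Dv : ℚ) ≠ 0 := by exact_mod_cast hDv0
      exact hvi (by simpa [hDvq] using this)
    have h1 : p ∣ (z i).natAbs := Int.natCast_dvd.mp hdvd
    have := Nat.le_of_dvd (Int.natAbs_pos.mpr hzne) h1
    have := hMz i
    omega
  have hpu : ∀ i, w i ≠ 0 → ¬ (p : ℤ) ∣ u i := by
    intro i hwi hdvd
    have hune : u i ≠ 0 := by
      intro h
      have := hu i
      rw [h] at this
      have hDwq : (Dw : ℚ) ≠ 0 := by exact_mod_cast hDw0
      exact hwi (by simpa [hDwq] using this)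
    have h1 : p ∣ (u i).natAbs := Int.natCast_dvd.mp hdvd
    have := Nat.le_of_dvd (Int.natAbs_pos.mpr hune) h1
    have := hMu i
    omega
  have hp0 : (0:ℚ) < (p:ℚ) := by exact_mod_cast hp.pos
  have h1p : (1:ℚ) ≤ (p:ℚ) := by exact_mod_cast hp.one_lt.le
  have hpne : ((p:ℚ)) ≠ 0 := ne_of_gt hp0
  have hDvε : (Dv : ℚ) < ε * (p:ℚ) := by
    have h1 : (⌈(Dv : ℚ)/ε⌉₊ : ℚ) < (p : ℚ) := by
      exact_mod_cast (by omega : ⌈(Dv : ℚ)/ε⌉₊ < p)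
    have h2 := Nat.le_ceil ((Dv : ℚ)/ε)
    have h3 : (Dv : ℚ)/ε < (p:ℚ) := lt_of_le_of_lt h2 h1
    calc (Dv : ℚ) = (Dv : ℚ)/ε * ε := by field_simp
    _ < (p:ℚ) * ε := by exact mul_lt_mul_of_pos_right h3 hε
    _ = ε * (p:ℚ) := mul_comm _ _
  have hDwε : (Dw : ℚ) < ε * (p:ℚ) := by
    have h1 : (⌈(Dw : ℚ)/ε⌉₊ : ℚ) < (p : ℚ) := by
      exact_mod_cast (by omega : ⌈(Dw : ℚ)/ε⌉₊ < p)
    have h2 := Nat.le_ceil ((Dw : ℚ)/ε)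
    have h3 : (Dw : ℚ)/ε < (p:ℚ) := lt_of_le_of_lt h2 h1
    calc (Dw : ℚ) = (Dw : ℚ)/ε * ε := by field_simp
    _ < (p:ℚ) * ε := by exact mul_lt_mul_of_pos_right h3 hε
    _ = ε * (p:ℚ) := mul_comm _ _
  have hDvq : (0:ℚ) < (Dv:ℚ) := by exact_mod_cast Nat.pos_of_ne_zero hDv0
  have hDwq : (0:ℚ) < (Dw:ℚ) := by exact_mod_cast Nat.pos_of_ne_zero hDw0
  refine ⟨(Dv:ℚ)/(p:ℚ)^2, (Dw:ℚ)/(p:ℚ), by positivity, ?_, by positivity, ?_, ?_⟩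
  · rw [div_lt_iff₀ (by positivity)]
    nlinarith
  · rw [div_lt_iff₀ hp0]
    linarith
  · -- the main denominator computation
    have hX : ∀ i, (t + ((Dv:ℚ)/(p:ℚ)^2) • v) i = t i + ((z i : ℤ) : ℚ)/(p:ℚ)^2 := by
      intro i
      show t i + (Dv:ℚ)/(p:ℚ)^2 * v i = _
      rw [div_mul_eq_mul_div, hz i]
    have hY : ∀ i, (t + ((Dv:ℚ)/(p:ℚ)^2) • v + ((Dw:ℚ)/(p:ℚ)) • w) i
        = t i + ((z i + u i * p : ℤ) : ℚ)/(p:ℚ)^2 := by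
      intro i
      show t i + (Dv:ℚ)/(p:ℚ)^2 * v i + (Dw:ℚ)/(p:ℚ) * w i = _
      rw [div_mul_eq_mul_div, div_mul_eq_mul_div, hz i, hu i]
      push_cast
      field_simp
      ring
    have hdenX : ∀ i, ((t + ((Dv:ℚ)/(p:ℚ)^2) • v) i).den
        = if v i = 0 then (t i).den else (t i).den * p^2 := by
      intro i
      rw [hX i]
      by_cases h : v i = 0
      · simp [h, hz0 i h]
      · rw [if_neg h]
        exact den_add_div_pow (t i) hp (hpt i) (hpz i h) two_ne_zero
    have hdenY : ∀ i, ((t + ((Dv:ℚ)/(p:ℚ)^2) • v + ((Dw:ℚ)/(p:ℚ)) • w) i).den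
        = if v i = 0 then (if w i = 0 then (t i).den else (t i).den * p)
          else (t i).den * p^2 := by
      intro i
      rw [hY i]
      by_cases h : v i = 0
      · rw [if_pos h]
        by_cases h' : w i = 0
        · simp [h', hz0 i h, hu0 i h']
        · rw [if_neg h']
          have hrw : ((z i + u i * p : ℤ) : ℚ)/(p:ℚ)^2 = ((u i : ℤ) : ℚ)/(p:ℚ)^1 := by
            rw [hz0 i h]
            push_cast
            field_simp
            ring
          rw [hrw]
          rw [show (t i).den * p = (t i).den * p ^ 1 by ring]
          exact den_add_div_pow (t i) hp (hpt i) (hpu i h') one_ne_zero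
      · rw [if_neg h]
        have hnd : ¬ (p:ℤ) ∣ (z i + u i * p) := by
          intro hdvd
          have : (p:ℤ) ∣ z i := by
            have h2 : (p:ℤ) ∣ u i * (p:ℤ) := Dvd.intro_left (u i) rfl
            have := dvd_sub hdvd h2
            simpa using this
          exact hpz i h this
        exact den_add_div_pow (t i) hp (hpt i) hnd two_ne_zero
    have hlcmX : vecDen (t + ((Dv:ℚ)/(p:ℚ)^2) • v)
        = p^2 * Finset.univ.lcm (fun i => (t i).den) := by
      apply lcm_aux hp (fun i => (t i).den) _ hpt
      · intro i
        rw [hdenX i]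
        split
        · exact dvd_refl _
        · exact dvd_mul_right _ _
      · intro i
        rw [hdenX i]
        split
        · exact dvd_mul_left _ _
        · rw [mul_comm]
      · rw [hdenX i0, if_neg hi0]
        exact dvd_mul_left _ _
    have hlcmY : vecDen (t + ((Dv:ℚ)/(p:ℚ)^2) • v + ((Dw:ℚ)/(p:ℚ)) • w)
        = p^2 * Finset.univ.lcm (fun i => (t i).den) := by
      apply lcm_aux hp (fun i => (t i).den) _ hpt
      · intro i
        rw [hdenY i]
        split
        · split
          · exact dvd_refl _
          · exact dvd_mul_right _ _
        · exact dvd_mul_right _ _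
      · intro i
        rw [hdenY i]
        split
        · split
          · exact dvd_mul_left _ _
          · exact ⟨p, by ring⟩
        · rw [mul_comm]
      · rw [hdenY i0, if_neg hi0]
        exact dvd_mul_left _ _
    rw [hlcmX, hlcmY]
end

section
/- For every prime p and every rational vector t ∈ ℚ^n with p > den(t), and every nonzero integer vector v' ∈ ℤ^n all of whose coordinates have absolute value strictly less than p, one has den(t + v'/p) = den(t) · p. -/
lemma den_add_div (p : ℕ) (hp : p.Prime) (q : ℚ) (hpd : ¬ (p ∣ q.den))
    (a : ℤ) (hpa : ¬ ((p:ℤ) ∣ a)) : (q + (a:ℚ) / p).den = q.den * p := by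
  have hpne : (p:ℚ) ≠ 0 := by exact_mod_cast hp.ne_zero
  have hdne : (q.den:ℚ) ≠ 0 := by exact_mod_cast q.den_nz
  have key : (q.num:ℚ) / q.den = q := Rat.num_div_den q
  have heq : q + (a:ℚ) / p
      = ((q.num * p + a * q.den : ℤ) : ℚ) / (((q.den * p : ℕ) : ℤ) : ℚ) := by
    have key2 : q * (q.den:ℚ) = q.num := ((div_eq_iff hdne).mp key).symm
    have hne : (((q.den * p : ℕ) : ℤ) : ℚ) ≠ 0 := by exact_mod_cast (Nat.mul_pos q.pos hp.pos).ne'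
    rw [eq_div_iff hne]
    push_cast
    field_simp
    linear_combination (p:ℚ) * key2
  have hb0 : (0:ℤ) < ((q.den * p : ℕ) : ℤ) := by
    exact_mod_cast Nat.mul_pos q.pos hp.pos
  have hcop : Nat.Coprime (q.num * p + a * q.den).natAbs (q.den * p) := by
    apply Nat.coprime_of_dvd
    intro k hk hk1 hk2
    have hkN : (k:ℤ) ∣ (q.num * p + a * q.den) := Int.natCast_dvd.mpr hk1
    have hkP : Prime (k:ℤ) := Nat.prime_iff_prime_int.mp hk
    rcases (Nat.Prime.dvd_mul hk).mp hk2 with h | h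
    · -- k ∣ q.den
      have hkden : (k:ℤ) ∣ (q.den : ℤ) := Int.natCast_dvd_natCast.mpr h
      have h3 : (k:ℤ) ∣ q.num * p := by simpa using hkN.sub (hkden.mul_left a)
      rcases hkP.dvd_mul.mp h3 with h2 | h2
      · have : k ∣ q.num.natAbs := Int.natCast_dvd.mp h2
        have := (q.reduced.coprime_dvd_left this).eq_one_of_dvd h
        exact hk.one_lt.ne' this
      · have : k = p := (Nat.prime_dvd_prime_iff_eq hk hp).mp (Int.natCast_dvd_natCast.mp h2)
        exact hpd (this ▸ h)
    · have hkp : k = p := (Nat.prime_dvd_prime_iff_eq hk hp).mp h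
      subst hkp
      have h3 : (k:ℤ) ∣ a * q.den := by simpa using hkN.sub (dvd_mul_left (k:ℤ) q.num)
      rcases hkP.dvd_mul.mp h3 with h2 | h2
      · exact hpa h2
      · exact hpd (Int.natCast_dvd_natCast.mp h2)
  have := Rat.den_div_eq_of_coprime hb0 (by simpa [Int.natAbs_mul] using hcop)
  rw [heq]
  exact_mod_cast this



theorem stmt_7 {n : ℕ} (p : ℕ) (hp : p.Prime) (t : Fin n → ℚ)
    (hpt : vecDen t < p) (v' : Fin n → ℤ) (hv' : v' ≠ 0)
    (hbound : ∀ i, (v' i).natAbs < p) :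
    vecDen (t + fun i => (v' i : ℚ) / (p : ℚ)) = vecDen t * p := by
  have hD0 : vecDen t ≠ 0 := by
    simp only [vecDen, Ne, Finset.lcm_eq_zero_iff]
    intro h
    obtain ⟨i, -, hi⟩ := h
    exact (t i).den_nz hi
  have hpD : ¬ p ∣ vecDen t :=
    fun h => absurd (Nat.le_of_dvd (Nat.pos_of_ne_zero hD0) h) (not_le.mpr hpt)
  have hdenD : ∀ i, (t i).den ∣ vecDen t := fun i => Finset.dvd_lcm (Finset.mem_univ i)
  have hpden : ∀ i, ¬ p ∣ (t i).den := fun i h => hpD (h.trans (hdenD i))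
  have hden : ∀ i, ((t + fun i => (v' i : ℚ) / (p : ℚ)) i).den
      = if v' i = 0 then (t i).den else (t i).den * p := by
    intro i
    by_cases h : v' i = 0
    · simp [h]
    · rw [if_neg h]
      have hpa : ¬ ((p:ℤ) ∣ v' i) := by
        intro hd
        have h1 : p ∣ (v' i).natAbs := Int.natCast_dvd.mp hd
        have h2 : 0 < (v' i).natAbs := Int.natAbs_pos.mpr h
        exact absurd (Nat.le_of_dvd h2 h1) (not_le.mpr (hbound i))
      simpa using den_add_div p hp (t i) (hpden i) (v' i) hpa
  apply Nat.dvd_antisymm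
  · apply Finset.lcm_dvd
    intro i _
    rw [hden i]
    split
    · exact (hdenD i).mul_right p
    · exact mul_dvd_mul (hdenD i) dvd_rfl
  · have hcop : Nat.Coprime (vecDen t) p := ((hp.coprime_iff_not_dvd).mpr hpD).symm
    apply Nat.Coprime.mul_dvd_of_dvd_of_dvd hcop
    · apply Finset.lcm_dvd
      intro i _
      have h1 : (t i).den ∣ ((t + fun i => (v' i : ℚ) / (p : ℚ)) i).den := by
        rw [hden i]; split; exacts [dvd_rfl, dvd_mul_right _ _]
      exact h1.trans (Finset.dvd_lcm (Finset.mem_univ i))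
    · obtain ⟨j, hj⟩ : ∃ j, v' j ≠ 0 := by
        by_contra hcon; push_neg at hcon; exact hv' (funext hcon)
      have h1 : p ∣ ((t + fun i => (v' i : ℚ) / (p : ℚ)) j).den := by
        rw [hden j, if_neg hj]; exact dvd_mul_left _ _
      exact h1.trans (Finset.dvd_lcm (Finset.mem_univ j))
end
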